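/- Let ŷ, F₁, F₂, Θ be natural numbers with 1 ≤ Θ ≤ ŷ and F₁ < F₂. Then ⌊ŷ·F₂/Θ + 1/2⌋ − ⌊ŷ·F₁/Θ + 1/2⌋ ≥ 1. -/
import Mathlib

/-- Nonemptiness of finite-precision arithmetic-coding subintervals:
    if `1 ≤ Θ ≤ ŷ` and `F₁ < F₂`, the rounded boundary values differ by at least `1`. -/
theorem one_le_floor_diff (yhat F₁ F₂ Θ : ℕ) (hΘ : 1 ≤ Θ) (hΘy : Θ ≤ yhat) (hF : F₁ < F₂) :
    1 ≤ (⌊(yhat : ℝ) * (F₂ : ℝ) / (Θ : ℝ) + 1 / 2⌋ : ℤ) -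
        (⌊(yhat : ℝ) * (F₁ : ℝ) / (Θ : ℝ) + 1 / 2⌋ : ℤ) := by
  have hΘ0 : (0:ℝ) < (Θ:ℝ) := by exact_mod_cast hΘ
  have key : (yhat : ℝ) * F₁ / Θ + 1/2 + 1 ≤ (yhat : ℝ) * F₂ / Θ + 1/2 := by
    have h1 : (yhat : ℝ) * F₁ + Θ ≤ (yhat : ℝ) * F₂ := by
      have : (yhat : ℝ) * F₁ + yhat ≤ yhat * F₂ := by
        have : (yhat : ℝ) * (F₁ + 1) ≤ yhat * F₂ := by
          apply mul_le_mul_of_nonneg_left _ (by positivity)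
          exact_mod_cast hF
        linarith [this]
      have hy : (Θ:ℝ) ≤ yhat := by exact_mod_cast hΘy
      linarith
    have : ((yhat : ℝ) * F₁ + Θ) / Θ ≤ (yhat : ℝ) * F₂ / Θ := by gcongr
    rw [add_div, div_self (ne_of_gt hΘ0)] at this
    linarith
  have := Int.floor_le_floor key
  rw [show (yhat : ℝ) * F₁ / Θ + 1/2 + 1 = ((yhat : ℝ) * F₁ / Θ + 1/2) + (1:ℤ) by push_cast; ring,
    Int.floor_add_intCast] at this
  omega
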